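/- Let k be a perfect field with algebraic closure k̄, and let K and K′ be field extensions of k. Then there exists a k-algebra isomorphism K ≅ K′ if and only if there exists a k̄-algebra isomorphism T : k̄ ⊗_k K → k̄ ⊗_k K′ which commutes with the Galois action, i.e., for every σ ∈ Aut(k̄/k) one has T ∘ (σ ⊗ id_K) = (σ ⊗ id_{K′}) ∘ T. -/

import Mathlib

open scoped TensorProduct

lemma fixed_scalar (k : Type) [Field k] [PerfectField k] (c : AlgebraicClosure k)
    (h : ∀ σ : AlgebraicClosure k ≃ₐ[k] AlgebraicClosure k, σ c = c) :
    ∃ a : k, algebraMap k (AlgebraicClosure k) a = c := by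
  classical
  have hint : IsIntegral k c := Algebra.IsIntegral.isIntegral c
  have hsep : (minpoly k c).Separable := Algebra.IsSeparable.isSeparable k c
  have hsplit : ((minpoly k c).map (algebraMap k (AlgebraicClosure k))).Splits :=
    IsAlgClosed.splits _
  set p := (minpoly k c).map (algebraMap k (AlgebraicClosure k)) with hp
  have hroots : ∀ y ∈ p.roots, y = c := by
    intro y hy
    have hy' : Polynomial.aeval y (minpoly k c) = 0 := by
      have := Polynomial.isRoot_of_mem_roots hy
      rwa [Polynomial.IsRoot, Polynomial.eval_map, ← Polynomial.aeval_def] at this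
    obtain ⟨σ, hσ⟩ := minpoly.exists_algEquiv_of_root (Algebra.IsAlgebraic.isAlgebraic c) hy'
    calc y = σ.symm (σ y) := (σ.symm_apply_apply y).symm
    _ = σ.symm c := by rw [hσ]
    _ = c := h σ.symm
  have hnodup : p.roots.Nodup := Polynomial.nodup_roots (hsep.map)
  have hcard : (minpoly k c).natDegree = p.roots.card :=
    by rw [← Polynomial.natDegree_map (algebraMap k (AlgebraicClosure k))]
       exact hsplit.natDegree_eq_card_roots
  have hle : p.roots.card ≤ 1 := by
    rw [← Multiset.toFinset_card_of_nodup hnodup]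
    refine le_trans (Finset.card_le_card (fun y hy => ?_)) (Finset.card_singleton c).le
    rw [Finset.mem_singleton]
    exact hroots y (Multiset.mem_toFinset.1 hy)
  have hd1 : (minpoly k c).natDegree = 1 :=
    le_antisymm (hcard ▸ hle) (minpoly.natDegree_pos hint)
  have := (minpoly.degree_eq_one_iff).1 (by
    rw [Polynomial.degree_eq_natDegree (minpoly.ne_zero hint), hd1]; rfl)
  obtain ⟨a, ha⟩ := this
  exact ⟨a, ha⟩

lemma repr_map_eq (k : Type) [Field k] (K : Type) [Field K] [Algebra k K]
    {ι : Type} (b : Module.Basis ι k K) (σ : AlgebraicClosure k ≃ₐ[k] AlgebraicClosure k)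
    (x : AlgebraicClosure k ⊗[k] K) :
    (Algebra.TensorProduct.basis (AlgebraicClosure k) b).repr
        (Algebra.TensorProduct.map σ.toAlgHom (AlgHom.id k K) x)
      = ((Algebra.TensorProduct.basis (AlgebraicClosure k) b).repr x).mapRange σ (map_zero σ) := by
  induction x using TensorProduct.induction_on with
  | zero => simp
  | tmul c m =>
    ext i
    simp [Algebra.TensorProduct.basis_repr_tmul, Finsupp.mapRange_apply, map_mul,
      AlgEquiv.commutes, Algebra.smul_def]
  | add u v hu hv =>
    rw [map_add, map_add, hu, hv, map_add]
    ext i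
    simp [Finsupp.mapRange_apply]

lemma fixed_tensor (k : Type) [Field k] [PerfectField k] (K : Type) [Field K] [Algebra k K]
    (x : AlgebraicClosure k ⊗[k] K)
    (hx : ∀ σ : AlgebraicClosure k ≃ₐ[k] AlgebraicClosure k,
      Algebra.TensorProduct.map σ.toAlgHom (AlgHom.id k K) x = x) :
    ∃ y : K, x = 1 ⊗ₜ[k] y := by
  classical
  set b := Module.Basis.ofVectorSpace k K
  set B := Algebra.TensorProduct.basis (AlgebraicClosure k) b with hB
  have hfix : ∀ i, ∀ σ : AlgebraicClosure k ≃ₐ[k] AlgebraicClosure k,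
      σ (B.repr x i) = B.repr x i := by
    intro i σ
    calc σ (B.repr x i)
        = (B.repr x).mapRange σ (map_zero σ) i := (Finsupp.mapRange_apply).symm
      _ = B.repr (Algebra.TensorProduct.map σ.toAlgHom (AlgHom.id k K) x) i := by
          rw [repr_map_eq k K b σ x]
      _ = B.repr x i := by rw [hx σ]
  choose a ha using fun i => fixed_scalar k (B.repr x i) (hfix i)
  refine ⟨(B.repr x).support.sum (fun i => a i • b i), ?_⟩
  rw [TensorProduct.tmul_sum]
  conv_lhs => rw [← B.linearCombination_repr x, Finsupp.linearCombination_apply, Finsupp.sum]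
  refine Finset.sum_congr rfl (fun i _ => ?_)
  rw [← ha i, Algebra.TensorProduct.basis_repr_symm_apply', Algebra.algebraMap_eq_smul_one,
    TensorProduct.smul_tmul]

lemma incl_injective (k : Type) [Field k] (K : Type) [Field K] [Algebra k K] :
    Function.Injective (fun y : K => (1 ⊗ₜ[k] y : AlgebraicClosure k ⊗[k] K)) := by
  intro y z h
  have h2 := congrArg (Algebra.TensorProduct.basis (AlgebraicClosure k)
      (Module.Basis.ofVectorSpace k K)).repr h
  rw [Algebra.TensorProduct.basis_repr_tmul, Algebra.TensorProduct.basis_repr_tmul,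
    one_smul, one_smul] at h2
  apply (Module.Basis.ofVectorSpace k K).repr.injective
  ext i
  have h3 := DFunLike.congr_fun h2 i
  simp only [Finsupp.mapRange_apply] at h3
  exact (algebraMap k (AlgebraicClosure k)).injective h3


/-- Two field extensions `K, K′` of a perfect field `k` are `k`-isomorphic iff there is a
`k̄`-algebra isomorphism `k̄ ⊗ₖ K ≃ k̄ ⊗ₖ K′` commuting with the Galois action
`σ ↦ σ ⊗ id`. -/
theorem isomorph_iff_equivariant_isomorph_of_tensor_algebraicClosure
    (k : Type) [Field k] [PerfectField k]
    (K K' : Type) [Field K] [Algebra k K] [Field K'] [Algebra k K'] :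
    Nonempty (K ≃ₐ[k] K') ↔
      ∃ T : (AlgebraicClosure k ⊗[k] K) ≃ₐ[AlgebraicClosure k]
          (AlgebraicClosure k ⊗[k] K'),
        ∀ (σ : AlgebraicClosure k ≃ₐ[k] AlgebraicClosure k)
          (x : AlgebraicClosure k ⊗[k] K),
          T (Algebra.TensorProduct.map σ.toAlgHom (AlgHom.id k K) x) =
            Algebra.TensorProduct.map σ.toAlgHom (AlgHom.id k K') (T x) := by
  constructor
  · rintro ⟨f⟩
    refine ⟨Algebra.TensorProduct.congr (AlgEquiv.refl (A₁ := AlgebraicClosure k)) f, ?_⟩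
    intro σ x
    induction x using TensorProduct.induction_on with
    | zero => simp
    | tmul c m =>
      simp [Algebra.TensorProduct.congr_apply, Algebra.TensorProduct.map_tmul]
    | add u v hu hv => simp only [map_add, hu, hv]
  · rintro ⟨T, hT⟩
    have hTsymm : ∀ (σ : AlgebraicClosure k ≃ₐ[k] AlgebraicClosure k)
        (x' : AlgebraicClosure k ⊗[k] K'),
        T.symm (Algebra.TensorProduct.map σ.toAlgHom (AlgHom.id k K') x') =
          Algebra.TensorProduct.map σ.toAlgHom (AlgHom.id k K) (T.symm x') := by
      intro σ x'
      apply T.injective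
      rw [T.apply_symm_apply, hT, T.apply_symm_apply]
    have hfixT : ∀ x : K, ∀ σ : AlgebraicClosure k ≃ₐ[k] AlgebraicClosure k,
        Algebra.TensorProduct.map σ.toAlgHom (AlgHom.id k K') (T (1 ⊗ₜ[k] x)) =
          T (1 ⊗ₜ[k] x) := by
      intro x σ
      rw [← hT]
      congr 1
      simp [Algebra.TensorProduct.map_tmul]
    choose e he using fun x : K => fixed_tensor k K' (T (1 ⊗ₜ[k] x)) (hfixT x)
    have hinj := incl_injective k K'
    have hadd : ∀ x y : K, e (x + y) = e x + e y := by
      intro x y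
      apply hinj
      show (1 ⊗ₜ[k] e (x+y) : AlgebraicClosure k ⊗[k] K') = 1 ⊗ₜ[k] (e x + e y)
      rw [← he, TensorProduct.tmul_add, TensorProduct.tmul_add, map_add, ← he, ← he]
    have hmul : ∀ x y : K, e (x * y) = e x * e y := by
      intro x y
      apply hinj
      show (1 ⊗ₜ[k] e (x*y) : AlgebraicClosure k ⊗[k] K') = 1 ⊗ₜ[k] (e x * e y)
      have : (1 ⊗ₜ[k] (x*y) : AlgebraicClosure k ⊗[k] K) = (1 ⊗ₜ[k] x) * (1 ⊗ₜ[k] y) := by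
        rw [Algebra.TensorProduct.tmul_mul_tmul, one_mul]
      rw [← he, this, map_mul, he, he, Algebra.TensorProduct.tmul_mul_tmul, one_mul]
    have hone : e 1 = 1 := by
      apply hinj
      show (1 ⊗ₜ[k] e 1 : AlgebraicClosure k ⊗[k] K') = 1 ⊗ₜ[k] 1
      rw [← he]
      have h1 : (1 ⊗ₜ[k] (1:K) : AlgebraicClosure k ⊗[k] K) = 1 := rfl
      have h2 : (1 ⊗ₜ[k] (1:K') : AlgebraicClosure k ⊗[k] K') = 1 := rfl
      rw [h1, h2, map_one]
    have hzero : e 0 = 0 := by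
      apply hinj
      show (1 ⊗ₜ[k] e 0 : AlgebraicClosure k ⊗[k] K') = 1 ⊗ₜ[k] 0
      rw [← he, TensorProduct.tmul_zero, TensorProduct.tmul_zero, map_zero]
    have hcomm : ∀ a : k, e (algebraMap k K a) = algebraMap k K' a := by
      intro a
      apply hinj
      show (1 ⊗ₜ[k] e (algebraMap k K a) : AlgebraicClosure k ⊗[k] K') =
        1 ⊗ₜ[k] algebraMap k K' a
      rw [← he]
      have h1 : (1 ⊗ₜ[k] algebraMap k K a : AlgebraicClosure k ⊗[k] K) =
          algebraMap (AlgebraicClosure k) _ (algebraMap k (AlgebraicClosure k) a) := by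
        rw [Algebra.TensorProduct.algebraMap_apply, Algebra.algebraMap_eq_smul_one (A := K),
          ← TensorProduct.smul_tmul, Algebra.algebraMap_eq_smul_one (R := k)
          (A := AlgebraicClosure k)]
        simp
      have h2 : (1 ⊗ₜ[k] algebraMap k K' a : AlgebraicClosure k ⊗[k] K') =
          algebraMap (AlgebraicClosure k) _ (algebraMap k (AlgebraicClosure k) a) := by
        rw [Algebra.TensorProduct.algebraMap_apply, Algebra.algebraMap_eq_smul_one (A := K'),
          ← TensorProduct.smul_tmul, Algebra.algebraMap_eq_smul_one (R := k)
          (A := AlgebraicClosure k)]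
        simp
      rw [h1, h2, AlgEquiv.commutes]
    let f : K →ₐ[k] K' :=
      { toFun := e, map_one' := hone, map_mul' := hmul, map_zero' := hzero,
        map_add' := hadd, commutes' := hcomm }
    have hsurj : Function.Surjective f := by
      intro y
      have hfix' : ∀ σ : AlgebraicClosure k ≃ₐ[k] AlgebraicClosure k,
          Algebra.TensorProduct.map σ.toAlgHom (AlgHom.id k K) (T.symm (1 ⊗ₜ[k] y)) =
            T.symm (1 ⊗ₜ[k] y) := by
        intro σ
        rw [← hTsymm]
        congr 1
        simp [Algebra.TensorProduct.map_tmul]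
      obtain ⟨x, hx⟩ := fixed_tensor k K (T.symm (1 ⊗ₜ[k] y)) hfix'
      refine ⟨x, hinj ?_⟩
      show (1 ⊗ₜ[k] e x : AlgebraicClosure k ⊗[k] K') = 1 ⊗ₜ[k] y
      rw [← he, ← hx, T.apply_symm_apply]
    exact ⟨AlgEquiv.ofBijective f ⟨f.toRingHom.injective, hsurj⟩⟩
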